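/- Let B1, B2 be I-crystals with 0 ∈ I, σ : B1 ⊗ B2 → B2 ⊗ B1 an isomorphism of I-crystals, and H : B1 ⊗ B2 → ℤ a local energy function with respect to σ. Let ℓ1, ℓ2 ∈ ℤ and suppose D_1 : B1 → ℤ and D_2 : B2 → ℤ satisfy: D_j(e_0 b) = D_j(b) − 1 for every b ∈ B_j with ε_0(b) > ℓ_j (j = 1, 2). Define D : B1 ⊗ B2 → ℤ by D(b1 ⊗ b2) = D_1(b1) + D_2(b̃2) + H(b1 ⊗ b2), where σ(b1 ⊗ b2) = b̃2 ⊗ b̃1. Then for every ℓ ≥ max{ℓ1, ℓ2} and every b ∈ B1 ⊗ B2 with ε_0(b) > ℓ, one has D(e_0 b) = D(b) − 1. -/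

import Mathlib

/-- An `I`-crystal on a carrier `B`: raising/lowering operators `e i, f i : B → B ⊔ {0}`
(encoded via `Option B`), mutually inverse where defined, with all strings finite. -/
structure Crystal (I : Type*) (B : Type*) where
  e : I → B → Option B
  f : I → B → Option B
  ef : ∀ (i : I) (b b' : B), e i b = some b' → f i b' = some b
  fe : ∀ (i : I) (b b' : B), f i b = some b' → e i b' = some b
  e_bounded : ∀ (i : I) (b : B), ∃ k : ℕ, (fun o => o.bind (e i))^[k] (some b) = none
  f_bounded : ∀ (i : I) (b : B), ∃ k : ℕ, (fun o => o.bind (f i))^[k] (some b) = none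

/-- The largest `k` such that `e^k b ≠ 0`, for a partial map `e : B → B ⊔ {0}`. -/
noncomputable def epsOf {B : Type*} (e : B → Option B) (b : B) : ℕ :=
  sSup {k : ℕ | (fun o => o.bind e)^[k] (some b) ≠ none}

/-- `ε_i(b) = max {k ≥ 0 | e_i^k b ≠ 0}`. -/
noncomputable def Crystal.eps {I B : Type*} (c : Crystal I B) (i : I) (b : B) : ℕ :=
  epsOf (c.e i) b

/-- `φ_i(b) = max {k ≥ 0 | f_i^k b ≠ 0}`. -/
noncomputable def Crystal.phi {I B : Type*} (c : Crystal I B) (i : I) (b : B) : ℕ :=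
  epsOf (c.f i) b

/-- The raising operators of the tensor product crystal `B1 ⊗ B2`. -/
noncomputable def tensorE {I B1 B2 : Type*} (c1 : Crystal I B1) (c2 : Crystal I B2)
    (i : I) (p : B1 × B2) : Option (B1 × B2) :=
  if c2.eps i p.2 ≤ c1.phi i p.1 then (c1.e i p.1).map (fun x => (x, p.2))
  else (c2.e i p.2).map (fun x => (p.1, x))

/-- The lowering operators of the tensor product crystal `B1 ⊗ B2`. -/
noncomputable def tensorF {I B1 B2 : Type*} (c1 : Crystal I B1) (c2 : Crystal I B2)
    (i : I) (p : B1 × B2) : Option (B1 × B2) :=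
  if c2.eps i p.2 < c1.phi i p.1 then (c1.f i p.1).map (fun x => (x, p.2))
  else (c2.f i p.2).map (fun x => (p.1, x))

/-- `e_i` acts on the first tensor factor of `p = a ⊗ b` iff `φ_i(a) ≥ ε_i(b)`. -/
def actsLeft {I A B : Type*} (cA : Crystal I A) (cB : Crystal I B) (i : I) (p : A × B) : Prop :=
  cB.eps i p.2 ≤ cA.phi i p.1

noncomputable instance {I A B : Type*} (cA : Crystal I A) (cB : Crystal I B) (i : I)
    (p : A × B) : Decidable (actsLeft cA cB i p) :=
  inferInstanceAs (Decidable (cB.eps i p.2 ≤ cA.phi i p.1))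

/-- `σ : B1 ⊗ B2 → B2 ⊗ B1` is an isomorphism of `I`-crystals: a bijection commuting with
all `e_i` and `f_i` (sending `0` to `0`). -/
structure IsCrystalIso {I B1 B2 : Type*} (c1 : Crystal I B1) (c2 : Crystal I B2)
    (σ : B1 × B2 → B2 × B1) : Prop where
  bij : Function.Bijective σ
  comm_e : ∀ (i : I) (p : B1 × B2), Option.map σ (tensorE c1 c2 i p) = tensorE c2 c1 i (σ p)
  comm_f : ∀ (i : I) (p : B1 × B2), Option.map σ (tensorF c1 c2 i p) = tensorF c2 c1 i (σ p)

/-- `H : B1 ⊗ B2 → ℤ` is a local energy function with respect to `σ`: it is unchanged by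
`e_i` for `i ≠ 0`, and changes by `+1` (resp. `−1`, resp. `0`) under `e_0` according to
whether `e_0` acts on the left (resp. right, resp. mixed) factors of `x` and `σ(x)`. -/
structure IsLocalEnergy {I B1 B2 : Type*} (i0 : I) (c1 : Crystal I B1) (c2 : Crystal I B2)
    (σ : B1 × B2 → B2 × B1) (H : B1 × B2 → ℤ) : Prop where
  ne_zero : ∀ (i : I), i ≠ i0 → ∀ (x y : B1 × B2), tensorE c1 c2 i x = some y → H y = H x
  zero_LL : ∀ (x y : B1 × B2), tensorE c1 c2 i0 x = some y →
    actsLeft c1 c2 i0 x → actsLeft c2 c1 i0 (σ x) → H y = H x + 1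
  zero_RR : ∀ (x y : B1 × B2), tensorE c1 c2 i0 x = some y →
    ¬ actsLeft c1 c2 i0 x → ¬ actsLeft c2 c1 i0 (σ x) → H y = H x - 1
  zero_mixed : ∀ (x y : B1 × B2), tensorE c1 c2 i0 x = some y →
    ¬ (actsLeft c1 c2 i0 x ↔ actsLeft c2 c1 i0 (σ x)) → H y = H x

/-- Apply a sequence of operators `e_{j_1}, …, e_{j_ℓ}` (in this order) to `x`. -/
def applyList {I X : Type*} (step : I → X → Option X) (J : List I) (x : X) : Option X :=
  J.foldl (fun o j => o.bind (step j)) (some x)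

/-- Along the application of `e_{j_1}, …, e_{j_ℓ}` to `p ∈ A ⊗ B`, count the steps with
`j_q = i0` that act on the first factor (if `onFirst = true`) resp. on the second factor
(if `onFirst = false`), following the tensor-product rule. -/
noncomputable def zeroCount {I A B : Type*} [DecidableEq I] (cA : Crystal I A)
    (cB : Crystal I B) (i0 : I) (onFirst : Bool) : List I → A × B → ℕ
  | [], _ => 0
  | j :: J, p =>
      (if j = i0 ∧ (actsLeft cA cB j p ↔ onFirst = true) then 1 else 0) +
        (tensorE cA cB j p).elim 0 (zeroCount cA cB i0 onFirst J)

private lemma iterBind_none {B : Type*} (e : B → Option B) (k : ℕ) :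
    (fun o => o.bind e)^[k] none = none := by
  induction k with
  | zero => rfl
  | succ n ih => rw [Function.iterate_succ_apply', ih]; rfl

private lemma iterBind_succ {B : Type*} (e : B → Option B) {b b' : B} (h : e b = some b')
    (k : ℕ) : (fun o => o.bind e)^[k + 1] (some b) = (fun o => o.bind e)^[k] (some b') := by
  rw [Function.iterate_succ_apply]
  simp [h]

private lemma mem_epsSet_mono {B : Type*} (e : B → Option B) (b : B) {j k : ℕ} (hjk : j ≤ k)
    (h : (fun o => o.bind e)^[k] (some b) ≠ none) :
    (fun o => o.bind e)^[j] (some b) ≠ none := by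
  intro hj
  apply h
  obtain ⟨m, rfl⟩ := Nat.exists_eq_add_of_le hjk
  rw [Nat.add_comm, Function.iterate_add_apply, hj, iterBind_none]

private lemma epsSet_bddAbove {B : Type*} (e : B → Option B) (b : B)
    (hb : ∃ k, (fun o => o.bind e)^[k] (some b) = none) :
    BddAbove {k : ℕ | (fun o => o.bind e)^[k] (some b) ≠ none} := by
  obtain ⟨k, hk⟩ := hb
  refine ⟨k, fun n hn => ?_⟩
  by_contra hnk
  exact mem_epsSet_mono e b (le_of_lt (not_le.mp hnk)) hn hk

private lemma epsOf_le_epsOf {B C : Type*} (e : B → Option B) (e' : C → Option C)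
    (b : B) (c : C)
    (hsub : ∀ k, (fun o => o.bind e)^[k] (some b) ≠ none →
      (fun o => o.bind e')^[k] (some c) ≠ none)
    (hbdd : BddAbove {k : ℕ | (fun o => o.bind e')^[k] (some c) ≠ none}) :
    epsOf e b ≤ epsOf e' c :=
  csSup_le_csSup hbdd ⟨0, by simp⟩ hsub

private lemma phi_le_of_e {I B : Type*} (c : Crystal I B) (i : I) {b b' : B}
    (h : c.e i b = some b') : c.phi i b ≤ c.phi i b' := by
  apply epsOf_le_epsOf
  · intro k hk
    have hf : c.f i b' = some b := c.ef i b b' h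
    have h1 : (fun o => o.bind (c.f i))^[k + 1] (some b') =
        (fun o => o.bind (c.f i))^[k] (some b) := iterBind_succ _ hf k
    exact mem_epsSet_mono (c.f i) b' (Nat.le_succ k) (h1 ▸ hk)
  · exact epsSet_bddAbove _ _ (c.f_bounded i b')

private lemma actsLeft_step {I A B : Type*} (cA : Crystal I A) (cB : Crystal I B) (i : I)
    {p : A × B} {a' : A} (hL : actsLeft cA cB i p) (h : cA.e i p.1 = some a') :
    actsLeft cA cB i (a', p.2) :=
  le_trans hL (phi_le_of_e cA i h)

private lemma tensorE_iter_left {I A B : Type*} (cA : Crystal I A) (cB : Crystal I B) (i : I) :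
    ∀ (k : ℕ) (p : A × B), actsLeft cA cB i p →
      (fun o => o.bind (tensorE cA cB i))^[k] (some p) =
        Option.map (fun x => (x, p.2)) ((fun o => o.bind (cA.e i))^[k] (some p.1)) := by
  intro k
  induction k with
  | zero => intro p _; rfl
  | succ n ih =>
    intro p hL
    rw [Function.iterate_succ_apply, Function.iterate_succ_apply]
    simp only [Option.bind_some]
    unfold tensorE
    rw [if_pos (show cB.eps i p.2 ≤ cA.phi i p.1 from hL)]
    cases he : cA.e i p.1 with
    | none => simp [iterBind_none]
    | some a' =>
      simp only [Option.map_some]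
      exact ih (a', p.2) (actsLeft_step cA cB i hL he)

private lemma tensorE_iter_sigma {I B1 B2 : Type*} (c1 : Crystal I B1) (c2 : Crystal I B2)
    (σ : B1 × B2 → B2 × B1) (i : I)
    (hcomm : ∀ (p : B1 × B2), Option.map σ (tensorE c1 c2 i p) = tensorE c2 c1 i (σ p)) :
    ∀ (k : ℕ) (p : B1 × B2),
      (fun o => o.bind (tensorE c2 c1 i))^[k] (some (σ p)) =
        Option.map σ ((fun o => o.bind (tensorE c1 c2 i))^[k] (some p)) := by
  intro k
  induction k with
  | zero => intro p; rfl
  | succ n ih =>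
    intro p
    rw [Function.iterate_succ_apply, Function.iterate_succ_apply]
    simp only [Option.bind_some]
    rw [← hcomm p]
    cases hq : tensorE c1 c2 i p with
    | none => simp [iterBind_none]
    | some q => simpa using ih q

private lemma epsOf_tensor_sigma {I B1 B2 : Type*} (c1 : Crystal I B1) (c2 : Crystal I B2)
    (σ : B1 × B2 → B2 × B1) (i : I)
    (hcomm : ∀ (p : B1 × B2), Option.map σ (tensorE c1 c2 i p) = tensorE c2 c1 i (σ p))
    (p : B1 × B2) : epsOf (tensorE c2 c1 i) (σ p) = epsOf (tensorE c1 c2 i) p := by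
  unfold epsOf
  congr 1
  ext k
  simp only [Set.mem_setOf_eq, tensorE_iter_sigma c1 c2 σ i hcomm k p,
    Ne, Option.map_eq_none_iff]

private lemma epsOf_tensor_le_left {I A B : Type*} (cA : Crystal I A) (cB : Crystal I B) (i : I)
    {p : A × B} (hL : actsLeft cA cB i p) :
    epsOf (tensorE cA cB i) p ≤ cA.eps i p.1 := by
  apply epsOf_le_epsOf
  · intro k hk
    rw [tensorE_iter_left cA cB i k p hL] at hk
    simpa [Option.map_eq_none_iff] using hk
  · exact epsSet_bddAbove _ _ (cA.e_bounded i p.1)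

/-- if `D_j(e_0 b) = D_j(b) − 1` whenever `ε_0(b) > ℓ_j` (`j = 1, 2`) and
`D(b1 ⊗ b2) = D_1(b1) + D_2(b̃2) + H(b1 ⊗ b2)` where `σ(b1 ⊗ b2) = b̃2 ⊗ b̃1`, then for
every `ℓ ≥ max{ℓ1, ℓ2}` and every `b ∈ B1 ⊗ B2` with `ε_0(b) > ℓ`,
`D(e_0 b) = D(b) − 1`. -/
theorem energy_e_zero {I B1 B2 : Type*} (i0 : I)
    (c1 : Crystal I B1) (c2 : Crystal I B2) (σ : B1 × B2 → B2 × B1)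
    (hσ : IsCrystalIso c1 c2 σ) (H : B1 × B2 → ℤ) (hH : IsLocalEnergy i0 c1 c2 σ H)
    (l1 l2 : ℤ) (D1 : B1 → ℤ) (D2 : B2 → ℤ)
    (hD1 : ∀ (b b' : B1), l1 < (c1.eps i0 b : ℤ) → c1.e i0 b = some b' → D1 b' = D1 b - 1)
    (hD2 : ∀ (b b' : B2), l2 < (c2.eps i0 b : ℤ) → c2.e i0 b = some b' → D2 b' = D2 b - 1)
    (D : B1 × B2 → ℤ) (hD : ∀ p : B1 × B2, D p = D1 p.1 + D2 (σ p).1 + H p)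
    (l : ℤ) (hl : max l1 l2 ≤ l)
    (b : B1 × B2) (hb : l < (epsOf (tensorE c1 c2 i0) b : ℤ))
    (b' : B1 × B2) (hb' : tensorE c1 c2 i0 b = some b') :
    D b' = D b - 1 := by
  classical
  have hcomm := hσ.comm_e i0
  have hσb' : tensorE c2 c1 i0 (σ b) = some (σ b') := by
    rw [← hcomm b, hb']
    rfl
  have hepsσ : epsOf (tensorE c2 c1 i0) (σ b) = epsOf (tensorE c1 c2 i0) b :=
    epsOf_tensor_sigma c1 c2 σ i0 hcomm b
  by_cases hL : actsLeft c1 c2 i0 b <;> by_cases hLσ : actsLeft c2 c1 i0 (σ b)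
  · -- LL case
    have hε1 : l1 < (c1.eps i0 b.1 : ℤ) := by
      have h1 := epsOf_tensor_le_left c1 c2 i0 hL
      have : (epsOf (tensorE c1 c2 i0) b : ℤ) ≤ (c1.eps i0 b.1 : ℤ) := by exact_mod_cast h1
      have hl1 : l1 ≤ l := le_trans (le_max_left l1 l2) hl
      linarith
    have hε2 : l2 < (c2.eps i0 (σ b).1 : ℤ) := by
      have h1 := epsOf_tensor_le_left c2 c1 i0 hLσ
      rw [hepsσ] at h1
      have : (epsOf (tensorE c1 c2 i0) b : ℤ) ≤ (c2.eps i0 (σ b).1 : ℤ) := by exact_mod_cast h1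
      have hl2 : l2 ≤ l := le_trans (le_max_right l1 l2) hl
      linarith
    have hb1 := hb'
    unfold tensorE at hb1
    rw [if_pos (show c2.eps i0 b.2 ≤ c1.phi i0 b.1 from hL)] at hb1
    obtain ⟨a, ha, hab⟩ := Option.map_eq_some_iff.mp hb1
    have hσ1 := hσb'
    unfold tensorE at hσ1
    rw [if_pos (show c1.eps i0 (σ b).2 ≤ c2.phi i0 (σ b).1 from hLσ)] at hσ1
    obtain ⟨t, ht, htb⟩ := Option.map_eq_some_iff.mp hσ1
    have hH1 : H b' = H b + 1 := hH.zero_LL b b' hb' hL hLσ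
    have hd1 : D1 a = D1 b.1 - 1 := hD1 b.1 a hε1 ha
    have hd2 : D2 t = D2 (σ b).1 - 1 := hD2 (σ b).1 t hε2 ht
    rw [hD b', hD b, hH1, ← htb, ← hab]
    simp only [hd1, hd2]
    ring
  · -- L, mixed
    have hε1 : l1 < (c1.eps i0 b.1 : ℤ) := by
      have h1 := epsOf_tensor_le_left c1 c2 i0 hL
      have : (epsOf (tensorE c1 c2 i0) b : ℤ) ≤ (c1.eps i0 b.1 : ℤ) := by exact_mod_cast h1
      have hl1 : l1 ≤ l := le_trans (le_max_left l1 l2) hl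
      linarith
    have hb1 := hb'
    unfold tensorE at hb1
    rw [if_pos (show c2.eps i0 b.2 ≤ c1.phi i0 b.1 from hL)] at hb1
    obtain ⟨a, ha, hab⟩ := Option.map_eq_some_iff.mp hb1
    have hσ1 := hσb'
    unfold tensorE at hσ1
    rw [if_neg (show ¬ c1.eps i0 (σ b).2 ≤ c2.phi i0 (σ b).1 from hLσ)] at hσ1
    obtain ⟨t, ht, htb⟩ := Option.map_eq_some_iff.mp hσ1
    have hH1 : H b' = H b := hH.zero_mixed b b' hb' (by simp [hL, hLσ])
    have hd1 : D1 a = D1 b.1 - 1 := hD1 b.1 a hε1 ha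
    rw [hD b', hD b, hH1, ← htb, ← hab]
    simp only [hd1]
    ring
  · -- R, mixed
    have hε2 : l2 < (c2.eps i0 (σ b).1 : ℤ) := by
      have h1 := epsOf_tensor_le_left c2 c1 i0 hLσ
      rw [hepsσ] at h1
      have : (epsOf (tensorE c1 c2 i0) b : ℤ) ≤ (c2.eps i0 (σ b).1 : ℤ) := by exact_mod_cast h1
      have hl2 : l2 ≤ l := le_trans (le_max_right l1 l2) hl
      linarith
    have hb1 := hb'
    unfold tensorE at hb1
    rw [if_neg (show ¬ c2.eps i0 b.2 ≤ c1.phi i0 b.1 from hL)] at hb1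
    obtain ⟨a, ha, hab⟩ := Option.map_eq_some_iff.mp hb1
    have hσ1 := hσb'
    unfold tensorE at hσ1
    rw [if_pos (show c1.eps i0 (σ b).2 ≤ c2.phi i0 (σ b).1 from hLσ)] at hσ1
    obtain ⟨t, ht, htb⟩ := Option.map_eq_some_iff.mp hσ1
    have hH1 : H b' = H b := hH.zero_mixed b b' hb' (by simp [hL, hLσ])
    have hd2 : D2 t = D2 (σ b).1 - 1 := hD2 (σ b).1 t hε2 ht
    rw [hD b', hD b, hH1, ← htb, ← hab]
    simp only [hd2]
    ring
  · -- RR case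
    have hb1 := hb'
    unfold tensorE at hb1
    rw [if_neg (show ¬ c2.eps i0 b.2 ≤ c1.phi i0 b.1 from hL)] at hb1
    obtain ⟨a, ha, hab⟩ := Option.map_eq_some_iff.mp hb1
    have hσ1 := hσb'
    unfold tensorE at hσ1
    rw [if_neg (show ¬ c1.eps i0 (σ b).2 ≤ c2.phi i0 (σ b).1 from hLσ)] at hσ1
    obtain ⟨t, ht, htb⟩ := Option.map_eq_some_iff.mp hσ1
    have hH1 : H b' = H b - 1 := hH.zero_RR b b' hb' hL hLσ
    rw [hD b', hD b, hH1, ← htb, ← hab]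
    ring
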